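/- arXiv:2302.04581 — 4 statements merged into one kernel-verified Lean document; each statement's English description precedes it below -/
import Mathlib

section
/- Let (M, v) be a chore instance with universal ordering, let τ ≥ 0 and n ≥ 1, and let D = (D_1, ..., D_n) be the bundle collection output by FFD(M, v, τ, n). Then for every k ∈ {1, ..., n}, D_k is lexicographically equal to B_k, the k-th benchmark bundle of D with respect to v and τ. -/
open scoped Classical

noncomputable section

variable {C : Type*} [LinearOrder C]

/-- Total cost of a bundle of chores: the sum of the chore costs. -/
def bundleCost (v : C → ℝ) (B : Finset C) : ℝ := ∑ c ∈ B, v c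

/-- The universal ordering is the ambient linear order on `C`, along which costs are
non-increasing; hence the `p`-th largest chore `B[p]` of a bundle `B` (ties broken by the
universal ordering) is the `p`-th element of `B` sorted along the order.
`nthCost v B p` is `v (B[p])` (1-indexed), with the convention `0` for `p > |B|`. -/
def nthCost (v : C → ℝ) (B : Finset C) (p : ℕ) : ℝ :=
  ((B.sort (· ≤ ·)).map v).getD (p - 1) 0

/-- `B1 =lex B2` : equal cost at each position. -/
def lexEq (v : C → ℝ) (B1 B2 : Finset C) : Prop :=
  ∀ p : ℕ, nthCost v B1 p = nthCost v B2 p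

/-- `B1 ≤lex B2`. -/
def lexLe (v : C → ℝ) (B1 B2 : Finset C) : Prop :=
  lexEq v B1 B2 ∨
    ∃ q : ℕ, nthCost v B1 q < nthCost v B2 q ∧ ∀ p < q, nthCost v B1 p = nthCost v B2 p

/-- `B1 <lex B2`. -/
def lexLt (v : C → ℝ) (B1 B2 : Finset C) : Prop :=
  lexLe v B1 B2 ∧ ¬ lexEq v B1 B2

/-- `(M, v)` is a chore instance for the universal ordering given by the linear order on `C`:
all costs are nonnegative and non-increasing along the ordering. -/
def ChoreOrdered (M : Finset C) (v : C → ℝ) : Prop :=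
  (∀ c ∈ M, 0 ≤ v c) ∧ ∀ c ∈ M, ∀ c' ∈ M, c ≤ c' → v c' ≤ v c

/-- `P` is a partition of `M` into `n` (possibly empty) bundles. -/
def IsPartition (M : Finset C) {n : ℕ} (P : Fin n → Finset C) : Prop :=
  (∀ i, P i ⊆ M) ∧ (∀ i j, i ≠ j → Disjoint (P i) (P j)) ∧ ∀ c ∈ M, ∃ i, c ∈ P i

/-- The maximin share: the minimum over partitions of `M` into `n` bundles of the
maximum bundle cost. -/
def MMS (M : Finset C) (v : C → ℝ) (n : ℕ) : ℝ :=
  sInf {x : ℝ | ∃ P : Fin n → Finset C, IsPartition M P ∧ ∀ i, bundleCost v (P i) ≤ x}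

/-- One pass of first-fit: scan the chores in the given list order, adding a chore whenever
the bundle cost stays at most `τ`. -/
def ffdFill (v : C → ℝ) (τ : ℝ) : List C → Finset C → Finset C
  | [], B => B
  | c :: rest, B =>
      if bundleCost v (insert c B) ≤ τ then ffdFill v τ rest (insert c B)
      else ffdFill v τ rest B

/-- The bundle FFD builds from the remaining chores `R` (scanned from largest to smallest,
i.e. along the linear order on `C`). -/
def ffdBundle (v : C → ℝ) (τ : ℝ) (R : Finset C) : Finset C :=
  ffdFill v τ (R.sort (· ≤ ·)) ∅

/-- The chores remaining after FFD has filled `k` bundles. -/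
def ffdRem (M : Finset C) (v : C → ℝ) (τ : ℝ) : ℕ → Finset C
  | 0 => M
  | k + 1 => ffdRem M v τ k \ ffdBundle v τ (ffdRem M v τ k)

/-- The `(k+1)`-st bundle (0-indexed `k`) output by FFD. -/
def FFDBundle (M : Finset C) (v : C → ℝ) (τ : ℝ) (k : ℕ) : Finset C :=
  ffdBundle v τ (ffdRem M v τ k)

/-- `FFD(M, v, τ, n)` allocates all chores. -/
def FFDAllocatesAll (M : Finset C) (v : C → ℝ) (τ : ℝ) (n : ℕ) : Prop :=
  ffdRem M v τ n = ∅

/-- The union `A_1 ∪ ⋯ ∪ A_{k-1}` of the bundles preceding the `k`-th one (0-indexed). -/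
def priorUnion {n : ℕ} (A : Fin n → Finset C) (k : Fin n) : Finset C :=
  (Finset.univ.filter fun j : Fin n => j < k).biUnion A

/-- `B` is a `k`-th benchmark bundle of the collection `A`: a lexicographically maximal
subset of `M \ (A_1 ∪ ⋯ ∪ A_{k-1})` among subsets of cost at most `τ`. -/
def IsBenchmark (M : Finset C) (v : C → ℝ) (τ : ℝ) {n : ℕ}
    (A : Fin n → Finset C) (k : Fin n) (B : Finset C) : Prop :=
  B ⊆ M \ priorUnion A k ∧ bundleCost v B ≤ τ ∧
    ∀ B' ⊆ M \ priorUnion A k, bundleCost v B' ≤ τ → lexLe v B' B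

/-- The tuple `(M, A, v, τ)` is First Fit Valid: `A` consists of pairwise disjoint bundles
in `M`, `τ ≥ MMS(M, v, n)`, and each `A_k` is lexicographically at least the `k`-th
benchmark bundle. -/
def FirstFitValid (M : Finset C) {n : ℕ} (A : Fin n → Finset C) (v : C → ℝ) (τ : ℝ) : Prop :=
  (∀ k, A k ⊆ M) ∧ (∀ i j, i ≠ j → Disjoint (A i) (A j)) ∧ MMS M v n ≤ τ ∧
    ∀ (k : Fin n) (B : Finset C), IsBenchmark M v τ A k B → lexLe v B (A k)

/-- `c` is the last chore `B[|B|]` of the bundle `B`. -/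
def IsLastChore (B : Finset C) (c : C) : Prop := c ∈ B ∧ ∀ c' ∈ B, c' ≤ c

/-- The fit-in space `fs` of a bundle: `τ` minus the cost of the bundle without its
last chore. -/
def fitSpace (v : C → ℝ) (τ : ℝ) (B : Finset C) : ℝ :=
  if h : B.Nonempty then τ - bundleCost v (B.erase (B.max' h)) else τ

/-- The chore `c = B[p]` of `B` is `x`-redundant: the cost of `{B[1], …, B[p-1]}`
is at least `x`. -/
def Redundant (v : C → ℝ) (x : ℝ) (B : Finset C) (c : C) : Prop :=
  c ∈ B ∧ x ≤ bundleCost v (B.filter fun c' => c' < c)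

/-- `A` dominates `B`: there is `f : B → A` with `v(f⁻¹(c')) ≤ v(c')` for every `c' ∈ A`. -/
def Dominates (v : C → ℝ) (A B : Finset C) : Prop :=
  ∃ f : C → C, (∀ c ∈ B, f c ∈ A) ∧
    ∀ c' ∈ A, bundleCost v (B.filter fun c => f c = c') ≤ v c'

/-- `cnew` is a suitable reduced chore for `cstar` (the excessive chore of `A_k`):
`v(cnew) < v(cstar)` and, running FFD on `M' = (M \ {cstar}) ∪ {cnew}`, the union of the
first `k` output bundles equals `((A_1 ∪ ⋯ ∪ A_k) \ {cstar}) ∪ {cnew}`. -/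
def SuitableReduced (M : Finset C) (v : C → ℝ) (τ : ℝ) {n : ℕ}
    (A : Fin n → Finset C) (k : Fin n) (cstar cnew : C) : Prop :=
  v cnew < v cstar ∧
    (Finset.univ.filter fun j : Fin n => j ≤ k).biUnion
        (fun j => FFDBundle (insert cnew (M.erase cstar)) v τ j.val) =
      insert cnew (((Finset.univ.filter fun j : Fin n => j ≤ k).biUnion A).erase cstar)

/-- The Tidy-Up conditions on the tuple `(M, A, v, τ)`. -/
def TidyUp (M : Finset C) {n : ℕ} (A : Fin n → Finset C) (v : C → ℝ) (τ : ℝ) : Prop :=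
  FirstFitValid M A v τ ∧
  (∃ cstar, M \ Finset.univ.biUnion A = {cstar} ∧ ∀ c ∈ M, v cstar ≤ v c) ∧
  (∀ k, ∀ c ∈ A k, ¬ Redundant v (MMS M v n) (A k) c) ∧
  (∀ c ∈ M, τ - MMS M v n < v c) ∧
  (∀ k, 2 ≤ (A k).card ∧ nthCost v (A k) 1 + nthCost v (A k) 2 < MMS M v n) ∧
  (∃ P : Fin n → Finset C, IsPartition M P ∧
    (∀ j, bundleCost v (P j) ≤ MMS M v n ∧ 3 ≤ (P j).card) ∧
    ∀ k j, ¬ Dominates v (A k) (P j))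

/-- One pass of HFFD's first-fit with remaining agents `T`: a chore is added iff some
remaining agent accepts the enlarged bundle. -/
def hffdFill {n : ℕ} (v : Fin n → C → ℝ) (h : Fin n → ℝ) (T : Finset (Fin n)) :
    List C → Finset C → Finset C
  | [], B => B
  | c :: rest, B =>
      if ∃ i ∈ T, bundleCost (v i) (insert c B) ≤ h i then
        hffdFill v h T rest (insert c B)
      else hffdFill v h T rest B

/-- `(A, assign)` is a run of HFFD on the instance `(M, v)` with thresholds `h`:
bundle `A_k` is built by first-fit over the remaining chores using the remaining agents,
and is assigned to the remaining agent `assign k`, who accepts it. -/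
def IsHFFDRun {n : ℕ} (M : Finset C) (v : Fin n → C → ℝ) (h : Fin n → ℝ)
    (A : Fin n → Finset C) (assign : Fin n → Fin n) : Prop :=
  Function.Injective assign ∧
    ∀ k : Fin n,
      A k = hffdFill v h
          (Finset.univ \ (Finset.univ.filter fun j : Fin n => j < k).image assign)
          ((M \ priorUnion A k).sort (· ≤ ·)) ∅ ∧
      bundleCost (v (assign k)) (A k) ≤ h (assign k)



/-! ### Auxiliary machinery for STATEMENT 0 -/

/-- List-level version of `nthCost`. -/
def listNth (l : List ℝ) (p : ℕ) : ℝ := l.getD (p - 1) 0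

def lexEqL (l1 l2 : List ℝ) : Prop := ∀ p : ℕ, listNth l1 p = listNth l2 p

def lexLeL (l1 l2 : List ℝ) : Prop :=
  lexEqL l1 l2 ∨
    ∃ q : ℕ, listNth l1 q < listNth l2 q ∧ ∀ p < q, listNth l1 p = listNth l2 p

lemma nthCost_eq_listNth (v : C → ℝ) (B : Finset C) (p : ℕ) :
    nthCost v B p = listNth ((B.sort (· ≤ ·)).map v) p := rfl

lemma lexEq_iff_L (v : C → ℝ) (B1 B2 : Finset C) :
    lexEq v B1 B2 ↔ lexEqL ((B1.sort (· ≤ ·)).map v) ((B2.sort (· ≤ ·)).map v) := Iff.rfl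

lemma lexLe_iff_L (v : C → ℝ) (B1 B2 : Finset C) :
    lexLe v B1 B2 ↔ lexLeL ((B1.sort (· ≤ ·)).map v) ((B2.sort (· ≤ ·)).map v) := Iff.rfl

lemma listNth_nil (p : ℕ) : listNth [] p = 0 := by simp [listNth]

lemma listNth_cons_zero (x : ℝ) (l : List ℝ) : listNth (x :: l) 0 = x := by
  simp [listNth]

lemma listNth_cons_one (x : ℝ) (l : List ℝ) : listNth (x :: l) 1 = x := by
  simp [listNth]

lemma listNth_cons_add_two (x : ℝ) (l : List ℝ) (p : ℕ) :
    listNth (x :: l) (p + 2) = listNth l (p + 1) := by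
  simp [listNth]

lemma listNth_zero_eq_one (l : List ℝ) : listNth l 0 = listNth l 1 := rfl

lemma lexLeL_cons (x : ℝ) {l1 l2 : List ℝ} (h : lexLeL l1 l2) :
    lexLeL (x :: l1) (x :: l2) := by
  rcases h with h | ⟨q, hq, hpre⟩
  · left
    intro p
    match p with
    | 0 => rw [listNth_cons_zero, listNth_cons_zero]
    | 1 => rw [listNth_cons_one, listNth_cons_one]
    | (p + 2) => rw [listNth_cons_add_two, listNth_cons_add_two]; exact h (p + 1)
  · right
    match q with
    | 0 =>
      refine ⟨2, ?_, ?_⟩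
      · rw [listNth_cons_add_two, listNth_cons_add_two, ← listNth_zero_eq_one,
          ← listNth_zero_eq_one]
        exact hq
      · intro p hp
        match p with
        | 0 => rw [listNth_cons_zero, listNth_cons_zero]
        | 1 => rw [listNth_cons_one, listNth_cons_one]
    | (q + 1) =>
      refine ⟨q + 1 + 1, ?_, ?_⟩
      · rw [show q + 1 + 1 = q + 2 from rfl, listNth_cons_add_two, listNth_cons_add_two]
        exact hq
      · intro p hp
        match p with
        | 0 => rw [listNth_cons_zero, listNth_cons_zero]
        | 1 => rw [listNth_cons_one, listNth_cons_one]
        | (p + 2) =>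
          rw [listNth_cons_add_two, listNth_cons_add_two]
          exact hpre (p + 1) (by omega)

lemma listNth_eq_zero {l : List ℝ} (h : ∀ x ∈ l, x = 0) (p : ℕ) : listNth l p = 0 := by
  unfold listNth
  generalize p - 1 = n
  induction l generalizing n with
  | nil => simp
  | cons y l ih =>
    cases n with
    | zero => simpa using h y (by simp)
    | succ n => exact ih (fun x hx => h x (by simp [hx])) n

lemma lexLeL_nil {l : List ℝ} (hnn : ∀ x ∈ l, 0 ≤ x) (hs : l.Pairwise (· ≥ ·)) :
    lexLeL [] l := by
  cases l with
  | nil => left; intro p; rfl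
  | cons y l =>
    rcases (hnn y (by simp)).lt_or_eq with hy | hy
    · right
      exact ⟨0, by rw [listNth_nil, listNth_cons_zero]; exact hy,
        fun p hp => absurd hp (Nat.not_lt_zero p)⟩
    · left
      intro p
      have hall : ∀ x ∈ y :: l, x = (0 : ℝ) := by
        intro x hx
        rcases List.mem_cons.mp hx with rfl | hx
        · exact hy.symm
        · have h1 : x ≤ y := (List.pairwise_cons.mp hs).1 x hx
          exact le_antisymm (h1.trans hy.symm.le) (hnn x (by simp [hx]))
      rw [listNth_eq_zero hall, listNth_nil]

lemma lexLe_antisymm {v : C → ℝ} {a b : Finset C} (h1 : lexLe v a b) (h2 : lexLe v b a) :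
    lexEq v a b := by
  rcases h1 with h1 | ⟨q1, hq1, hpre1⟩
  · exact h1
  rcases h2 with h2 | ⟨q2, hq2, hpre2⟩
  · exact fun p => (h2 p).symm
  rcases lt_trichotomy q1 q2 with h | h | h
  · exact absurd (hpre2 q1 h) (ne_of_gt hq1)
  · subst h; exact absurd hq2 (not_lt_of_gt hq1)
  · exact absurd (hpre1 q2 h) (ne_of_gt hq2)

lemma bundleCost_insert {v : C → ℝ} {B : Finset C} {c : C} (h : c ∉ B) :
    bundleCost v (insert c B) = v c + bundleCost v B := by
  simp [bundleCost, Finset.sum_insert h]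

lemma ffdFill_cost_le (v : C → ℝ) (τ : ℝ) (L : List C) (acc : Finset C)
    (h : bundleCost v acc ≤ τ) : bundleCost v (ffdFill v τ L acc) ≤ τ := by
  induction L generalizing acc with
  | nil => simpa [ffdFill] using h
  | cons c rest ih =>
    rw [ffdFill]
    split_ifs with h'
    · exact ih _ h'
    · exact ih _ h

lemma ffdFill_subset (v : C → ℝ) (τ : ℝ) (L : List C) (acc : Finset C) :
    ffdFill v τ L acc ⊆ acc ∪ L.toFinset := by
  induction L generalizing acc with
  | nil => simp [ffdFill]
  | cons c rest ih =>
    rw [ffdFill]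
    split_ifs with h'
    · refine (ih (insert c acc)).trans ?_
      intro x hx
      simp only [Finset.mem_union, Finset.mem_insert, List.toFinset_cons,
        List.mem_toFinset] at hx ⊢
      tauto
    · refine (ih acc).trans ?_
      intro x hx
      simp only [Finset.mem_union, Finset.mem_insert, List.toFinset_cons,
        List.mem_toFinset] at hx ⊢
      tauto

lemma ffdFill_insert_out (v : C → ℝ) (τ : ℝ) (L : List C) (c : C) (acc : Finset C)
    (hcL : c ∉ L) (hcacc : c ∉ acc) :
    ffdFill v τ L (insert c acc) = insert c (ffdFill v (τ - v c) L acc) := by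
  induction L generalizing acc with
  | nil => rfl
  | cons c' rest ih =>
    have hne : c ≠ c' := fun h => hcL (h ▸ List.mem_cons_self)
    have hcrest : c ∉ rest := fun h => hcL (List.mem_cons_of_mem c' h)
    have hkey : bundleCost v (insert c' (insert c acc)) =
        v c + bundleCost v (insert c' acc) := by
      rw [Finset.insert_comm c' c, bundleCost_insert (by
        simp only [Finset.mem_insert]
        push_neg
        exact ⟨hne, hcacc⟩)]
    rw [ffdFill, ffdFill, hkey]
    by_cases hb : bundleCost v (insert c' acc) ≤ τ - v c
    · rw [if_pos (by linarith), if_pos hb, Finset.insert_comm c' c,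
        ih (insert c' acc) hcrest (by simp only [Finset.mem_insert]; push_neg; exact ⟨hne, hcacc⟩)]
    · rw [if_neg (by linarith), if_neg hb, ih acc hcrest hcacc]

lemma map_sorted_ge (v : C → ℝ) (l : List C)
    (hmono : ∀ a ∈ l, ∀ b ∈ l, a ≤ b → v b ≤ v a) (hs : l.Pairwise (· ≤ ·)) :
    (l.map v).Pairwise (· ≥ ·) := by
  have h1 : l.Pairwise (fun a b => v b ≤ v a) :=
    List.Pairwise.imp_of_mem (fun {a b} ha hb hab => hmono a ha b hb hab) hs
  exact List.pairwise_map.mpr h1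

/-- The key greedy lemma: first-fit over a strictly sorted list (with `v` antitone on it)
produces a lexicographically maximal feasible bundle. -/
lemma ffdFill_lex_max (v : C → ℝ) :
    ∀ (L : List C) (τ : ℝ) (B : Finset C),
      L.Pairwise (· < ·) →
      (∀ c ∈ L, 0 ≤ v c) →
      (∀ a ∈ L, ∀ b ∈ L, a ≤ b → v b ≤ v a) →
      (∀ b ∈ B, b ∈ L) → bundleCost v B ≤ τ →
      lexLe v B (ffdFill v τ L ∅) := by
  intro L
  induction L with
  | nil =>
    intro τ B _ _ _ hB _
    have : B = ∅ := Finset.eq_empty_of_forall_notMem (fun x hx => by simpa using hB x hx)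
    subst this
    left
    intro p
    rfl
  | cons c rest ih =>
    intro τ B hsort hnn hmono hB hcost
    have hlt : ∀ b ∈ rest, c < b := (List.pairwise_cons.mp hsort).1
    have hrest_sort : rest.Pairwise (· < ·) := (List.pairwise_cons.mp hsort).2
    have hrest_nn : ∀ x ∈ rest, 0 ≤ v x := fun x hx => hnn x (by simp [hx])
    have hrest_mono : ∀ a ∈ rest, ∀ b ∈ rest, a ≤ b → v b ≤ v a :=
      fun a ha b hb hab => hmono a (by simp [ha]) b (by simp [hb]) hab
    have hins : bundleCost v (insert c (∅ : Finset C)) = v c := by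
      simp [bundleCost]
    rw [ffdFill]
    by_cases hfit : v c ≤ τ
    · rw [if_pos (by rw [hins]; exact hfit)]
      have hcrest : c ∉ rest := fun h => absurd (hlt c h) (lt_irrefl c)
      rw [ffdFill_insert_out v τ rest c ∅ hcrest (Finset.notMem_empty c)]
      set D' := ffdFill v (τ - v c) rest ∅ with hD'def
      have hD'rest : ∀ x ∈ D', x ∈ rest := by
        intro x hx
        have := ffdFill_subset v (τ - v c) rest ∅ hx
        simpa using this
      have hcD' : c ∉ D' := fun h => hcrest (hD'rest c h)
      have hsortD : (insert c D').sort (· ≤ ·) = c :: D'.sort (· ≤ ·) :=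
        Finset.sort_insert _ (fun b hb => (hlt b (hD'rest b hb)).le) hcD'
      by_cases hcB : c ∈ B
      · -- c belongs to B : strip the common head c
        have hB'sub : ∀ b ∈ B.erase c, b ∈ rest := by
          intro b hb
          have h1 := hB b (Finset.mem_of_mem_erase hb)
          rcases List.mem_cons.mp h1 with rfl | h1
          · exact absurd rfl (Finset.ne_of_mem_erase hb)
          · exact h1
        have hBsort : B.sort (· ≤ ·) = c :: (B.erase c).sort (· ≤ ·) := by
          conv_lhs => rw [← Finset.insert_erase hcB]
          exact Finset.sort_insert _
            (fun b hb => (hlt b (hB'sub b hb)).le) (Finset.notMem_erase c B)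
        have hcostB : bundleCost v B = v c + bundleCost v (B.erase c) := by
          conv_lhs => rw [← Finset.insert_erase hcB]
          exact bundleCost_insert (Finset.notMem_erase c B)
        have hcost' : bundleCost v (B.erase c) ≤ τ - v c := by
          rw [hcostB] at hcost; linarith
        have ih' := ih (τ - v c) (B.erase c) hrest_sort hrest_nn hrest_mono hB'sub hcost'
        rw [lexLe_iff_L] at ih' ⊢
        rw [hBsort, hsortD, List.map_cons, List.map_cons]
        exact lexLeL_cons (v c) ih'
      · -- c not in B
        have hBsub : ∀ b ∈ B, b ∈ rest := by
          intro b hb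
          rcases List.mem_cons.mp (hB b hb) with rfl | h1
          · exact absurd hb hcB
          · exact h1
        rcases Finset.eq_empty_or_nonempty B with rfl | hBne
        · rw [lexLe_iff_L]
          simp only [Finset.sort_empty, List.map_nil]
          apply lexLeL_nil
          · intro x hx
            simp only [List.mem_map] at hx
            obtain ⟨a, ha, rfl⟩ := hx
            have ha' := Finset.mem_sort (α := C) (· ≤ ·) |>.mp ha
            rcases Finset.mem_insert.mp ha' with rfl | ha'
            · exact hnn a (by simp)
            · exact hrest_nn a (hD'rest a ha')
          · apply map_sorted_ge
            · intro a ha b hb hab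
              have ha' := Finset.mem_sort (α := C) (· ≤ ·) |>.mp ha
              have hb' := Finset.mem_sort (α := C) (· ≤ ·) |>.mp hb
              have hmem : ∀ x, x ∈ insert c D' → x ∈ c :: rest := by
                intro x hx
                rcases Finset.mem_insert.mp hx with rfl | hx
                · exact List.mem_cons_self
                · exact List.mem_cons_of_mem _ (hD'rest x hx)
              exact hmono a (hmem a ha') b (hmem b hb') hab
            · exact Finset.pairwise_sort _ _
        · set b := B.min' hBne with hbdef
          have hbB : b ∈ B := B.min'_mem hBne
          have hbrest : b ∈ rest := hBsub b hbB
          have hB'sub : ∀ x ∈ B.erase b, x ∈ rest := fun x hx =>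
            hBsub x (Finset.mem_of_mem_erase hx)
          have hBsort : B.sort (· ≤ ·) = b :: (B.erase b).sort (· ≤ ·) := by
            conv_lhs => rw [← Finset.insert_erase hbB]
            exact Finset.sort_insert _
              (fun x hx => B.min'_le x (Finset.mem_of_mem_erase hx))
              (Finset.notMem_erase b B)
          have hvbc : v b ≤ v c := hmono c (by simp) b (by simp [hbrest]) (hlt b hbrest).le
          rcases hvbc.lt_or_eq with hvlt | hveq
          · -- strictly smaller head : strict lexicographic inequality at position 0
            rw [lexLe_iff_L, hBsort, hsortD, List.map_cons, List.map_cons]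
            right
            refine ⟨0, ?_, fun p hp => absurd hp (Nat.not_lt_zero p)⟩
            rw [listNth_cons_zero, listNth_cons_zero]
            exact hvlt
          · -- equal heads : strip them and use the induction hypothesis
            have hcostB : bundleCost v B = v b + bundleCost v (B.erase b) := by
              conv_lhs => rw [← Finset.insert_erase hbB]
              exact bundleCost_insert (Finset.notMem_erase b B)
            have hcost' : bundleCost v (B.erase b) ≤ τ - v c := by
              rw [hcostB] at hcost; rw [← hveq]; linarith
            have ih' := ih (τ - v c) (B.erase b) hrest_sort hrest_nn hrest_mono hB'sub hcost'
            rw [lexLe_iff_L] at ih' ⊢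
            rw [hBsort, hsortD, List.map_cons, List.map_cons, hveq]
            exact lexLeL_cons (v c) ih'
    · -- the head chore does not fit
      rw [if_neg (by rw [hins]; exact hfit)]
      have hcB : c ∉ B := by
        intro hc
        have h1 : v c ≤ bundleCost v B :=
          Finset.single_le_sum (f := v) (fun x hx => hnn x (hB x hx)) hc
        exact hfit (h1.trans hcost)
      have hBsub : ∀ b ∈ B, b ∈ rest := by
        intro b hb
        rcases List.mem_cons.mp (hB b hb) with rfl | h1
        · exact absurd hb hcB
        · exact h1
      exact ih τ B hrest_sort hrest_nn hrest_mono hBsub hcost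

lemma ffdBundle_lex_max (v : C → ℝ) (τ : ℝ) (R : Finset C)
    (hnn : ∀ c ∈ R, 0 ≤ v c) (hmono : ∀ a ∈ R, ∀ b ∈ R, a ≤ b → v b ≤ v a)
    (B : Finset C) (hBsub : B ⊆ R) (hcost : bundleCost v B ≤ τ) :
    lexLe v B (ffdBundle v τ R) := by
  apply ffdFill_lex_max v (R.sort (· ≤ ·)) τ B (Finset.sortedLT_sort R).pairwise
  · intro c hc; exact hnn c ((Finset.mem_sort _).mp hc)
  · intro a ha b hb hab
    exact hmono a ((Finset.mem_sort _).mp ha) b ((Finset.mem_sort _).mp hb) hab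
  · intro b hb; exact (Finset.mem_sort _).mpr (hBsub hb)
  · exact hcost

lemma ffdBundle_subset (v : C → ℝ) (τ : ℝ) (R : Finset C) : ffdBundle v τ R ⊆ R := by
  refine (ffdFill_subset v τ (R.sort (· ≤ ·)) ∅).trans ?_
  simp [Finset.sort_toFinset]

lemma ffdBundle_cost_le (v : C → ℝ) {τ : ℝ} (hτ : 0 ≤ τ) (R : Finset C) :
    bundleCost v (ffdBundle v τ R) ≤ τ :=
  ffdFill_cost_le v τ _ ∅ (by simpa [bundleCost] using hτ)

lemma ffdRem_subset (M : Finset C) (v : C → ℝ) (τ : ℝ) :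
    ∀ m, ffdRem M v τ m ⊆ M := by
  intro m
  induction m with
  | zero => exact subset_rfl
  | succ m ih => exact (Finset.sdiff_subset).trans ih

lemma ffdRem_eq (M : Finset C) (v : C → ℝ) (τ : ℝ) (m : ℕ) :
    ffdRem M v τ m = M \ (Finset.range m).biUnion (fun j => FFDBundle M v τ j) := by
  induction m with
  | zero => simp [ffdRem]
  | succ m ih =>
    have : ffdRem M v τ (m + 1) = ffdRem M v τ m \ FFDBundle M v τ m := rfl
    rw [this, ih]
    ext x
    simp only [Finset.mem_sdiff, Finset.mem_biUnion, Finset.mem_range, not_exists, not_and]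
    constructor
    · rintro ⟨⟨hxM, hx⟩, hx2⟩
      refine ⟨hxM, fun j hj => ?_⟩
      rcases Nat.lt_succ_iff_lt_or_eq.mp hj with hj | rfl
      · exact hx j hj
      · exact hx2
    · rintro ⟨hxM, hx⟩
      exact ⟨⟨hxM, fun j hj => hx j (Nat.lt_succ_of_lt hj)⟩, hx m (Nat.lt_succ_self m)⟩

lemma priorUnion_FFD (M : Finset C) (v : C → ℝ) (τ : ℝ) {n : ℕ} (k : Fin n) :
    M \ priorUnion (fun j : Fin n => FFDBundle M v τ j.val) k = ffdRem M v τ k.val := by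
  rw [ffdRem_eq]
  congr 1
  ext x
  simp only [priorUnion, Finset.mem_biUnion, Finset.mem_filter, Finset.mem_univ, true_and,
    Finset.mem_range]
  constructor
  · rintro ⟨j, hj, hx⟩
    exact ⟨j.val, hj, hx⟩
  · rintro ⟨m, hm, hx⟩
    exact ⟨⟨m, hm.trans k.isLt⟩, hm, hx⟩

/-- every bundle output by `FFD(M, v, τ, n)` is lexicographically equal to the
corresponding benchmark bundle of the FFD output collection. -/
theorem ffd_bundles_lexEq_benchmarks (M : Finset C) (v : C → ℝ) (τ : ℝ) (n : ℕ)
    (hv : ChoreOrdered M v) (hτ : 0 ≤ τ) (hn : 1 ≤ n) :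
    ∀ (k : Fin n) (B : Finset C),
      IsBenchmark M v τ (fun j : Fin n => FFDBundle M v τ j.val) k B →
      lexEq v (FFDBundle M v τ k.val) B := by
  intro k B hB
  obtain ⟨hBsub, hBcost, hBmax⟩ := hB
  have hrem := priorUnion_FFD M v τ (n := n) k
  have hRsub : ffdRem M v τ k.val ⊆ M := ffdRem_subset M v τ k.val
  have hDsub : FFDBundle M v τ k.val ⊆ ffdRem M v τ k.val :=
    ffdBundle_subset v τ _
  have hDcost : bundleCost v (FFDBundle M v τ k.val) ≤ τ := ffdBundle_cost_le v hτ _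
  have h1 : lexLe v (FFDBundle M v τ k.val) B :=
    hBmax _ (by rw [hrem]; exact hDsub) hDcost
  have h2 : lexLe v B (FFDBundle M v τ k.val) := by
    apply ffdBundle_lex_max v τ (ffdRem M v τ k.val)
    · exact fun c hc => hv.1 c (hRsub hc)
    · exact fun a ha b hb hab => hv.2 a (hRsub ha) b (hRsub hb) hab
    · rw [hrem] at hBsub; exact hBsub
    · exact hBcost
  exact lexLe_antisymm h1 h2

end
end

section
/- Let an IDO instance with n agents and thresholds (h_1, ..., h_n) be given, and suppose some run of HFFD successfully produces a sequence of bundles A = (A_1, ..., A_n), with ℓ the last agent (the agent receiving A_n). If h_ℓ ≥ MMS(M, v_ℓ, n), then the tuple (M, A, v_ℓ, h_ℓ) is First Fit Valid. -/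
open scoped Classical

noncomputable section

variable {C : Type*} [LinearOrder C]

lemma aux_union_val {B0 B1 : Finset C} (hd : Disjoint B0 B1) :
    (B0 ∪ B1).val = B0.val + B1.val := by
  rw [← Finset.disjUnion_eq_union B0 B1 hd]; rfl

lemma aux_sort_union {B0 B1 : Finset C} (hlt : ∀ x ∈ B0, ∀ y ∈ B1, x < y) :
    (B0 ∪ B1).sort (· ≤ ·) = B0.sort (· ≤ ·) ++ B1.sort (· ≤ ·) := by
  have hd : Disjoint B0 B1 := by
    rw [Finset.disjoint_left]
    intro a ha ha'
    exact lt_irrefl a (hlt a ha a ha')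
  apply fun h1 h2 h3 => List.Perm.eq_of_pairwise' (r := (· ≤ · : C → C → Prop)) h2 h3 h1
  · rw [← Multiset.coe_eq_coe]
    simp only [Finset.sort_eq, aux_union_val hd, ← Multiset.coe_add]
  · exact Finset.pairwise_sort _ _
  · rw [List.pairwise_append]
    refine ⟨Finset.pairwise_sort _ _, Finset.pairwise_sort _ _, ?_⟩
    intro x hx y hy
    exact le_of_lt (hlt x (by simpa using Finset.mem_sort _ |>.1 hx) y ((Finset.mem_sort _).1 hy))

lemma aux_sort_insert {c : C} {B : Finset C} (hc : ∀ y ∈ B, c < y) :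
    (insert c B).sort (· ≤ ·) = c :: B.sort (· ≤ ·) := by
  rw [Finset.insert_eq, aux_sort_union (by simpa using hc), Finset.sort_singleton]
  rfl

lemma nthCost_zero (v : C → ℝ) (B : Finset C) : nthCost v B 0 = nthCost v B 1 := rfl

lemma nthCost_union_left (v : C → ℝ) {B0 B1 : Finset C} (hlt : ∀ x ∈ B0, ∀ y ∈ B1, x < y)
    {p : ℕ} (hp : p - 1 < B0.card) : nthCost v (B0 ∪ B1) p = nthCost v B0 p := by
  unfold nthCost
  rw [aux_sort_union hlt, List.map_append, List.getD_append]
  simpa using hp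

lemma nthCost_union_right (v : C → ℝ) {B0 B1 : Finset C} (hlt : ∀ x ∈ B0, ∀ y ∈ B1, x < y)
    {p : ℕ} (hp : B0.card ≤ p - 1) :
    nthCost v (B0 ∪ B1) p = nthCost v B1 (p - B0.card) := by
  unfold nthCost
  rw [aux_sort_union hlt, List.map_append, List.getD_append_right]
  · congr 1
    simp only [List.length_map, Finset.length_sort]
    omega
  · simpa using hp

lemma nthCost_min' (v : C → ℝ) {B : Finset C} (hB : B.Nonempty) :
    nthCost v B 1 = v (B.min' hB) := by
  have h1 : B = insert (B.min' hB) (B.erase (B.min' hB)) := by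
    rw [Finset.insert_erase (B.min'_mem hB)]
  have h2 : (B.sort (· ≤ ·)) = B.min' hB :: (B.erase (B.min' hB)).sort (· ≤ ·) := by
    conv_lhs => rw [h1]
    apply aux_sort_insert
    intro y hy
    rcases Finset.mem_erase.1 hy with ⟨hne, hmem⟩
    exact lt_of_le_of_ne (B.min'_le y hmem) (Ne.symm hne)
  unfold nthCost
  rw [h2]
  rfl

lemma nthCost_eq_zero_of_card (v : C → ℝ) {B : Finset C} {p : ℕ} (hp : B.card ≤ p - 1) :
    nthCost v B p = 0 := by
  unfold nthCost
  apply List.getD_eq_default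
  simpa using hp

lemma nthCost_eq_zero_of_vals (v : C → ℝ) {B : Finset C} (h : ∀ x ∈ B, v x = 0) (p : ℕ) :
    nthCost v B p = 0 := by
  unfold nthCost
  rcases lt_or_ge (p - 1) ((B.sort (· ≤ ·)).map v).length with hlt | hle
  · rw [List.getD_eq_getElem _ _ hlt]
    have := List.getElem_mem hlt
    rcases List.mem_map.1 this with ⟨x, hx, hvx⟩
    rw [← hvx]
    exact h x ((Finset.mem_sort _).1 hx)
  · exact List.getD_eq_default _ _ hle

lemma lexLe_refl (v : C → ℝ) (B : Finset C) : lexLe v B B := Or.inl fun _ => rfl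

lemma lexLe_trans {v : C → ℝ} {B1 B2 B3 : Finset C}
    (h12 : lexLe v B1 B2) (h23 : lexLe v B2 B3) : lexLe v B1 B3 := by
  rcases h12 with he12 | ⟨q1, hlt1, heq1⟩
  · rcases h23 with he23 | ⟨q2, hlt2, heq2⟩
    · exact Or.inl fun p => (he12 p).trans (he23 p)
    · exact Or.inr ⟨q2, by rw [he12 q2]; exact hlt2, fun p hp => (he12 p).trans (heq2 p hp)⟩
  · rcases h23 with he23 | ⟨q2, hlt2, heq2⟩
    · exact Or.inr ⟨q1, by rw [← he23 q1]; exact hlt1, fun p hp => (heq1 p hp).trans (he23 p)⟩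
    · rcases lt_trichotomy q1 q2 with h | h | h
      · exact Or.inr ⟨q1, by rw [← heq2 q1 h]; exact hlt1,
          fun p hp => (heq1 p hp).trans (heq2 p (hp.trans h))⟩
      · subst h
        exact Or.inr ⟨q1, hlt1.trans hlt2, fun p hp => (heq1 p hp).trans (heq2 p hp)⟩
      · exact Or.inr ⟨q2, by rw [heq1 q2 h]; exact hlt2,
          fun p hp => (heq1 p (hp.trans h)).trans (heq2 p hp)⟩

/-- Witness builder: strict difference at position `d ≥ 1`, equality at positions `1 ≤ p < d`. -/
lemma lexLe_of_witness {v : C → ℝ} {B1 B2 : Finset C} {d : ℕ} (hd : 1 ≤ d)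
    (hlt : nthCost v B1 d < nthCost v B2 d)
    (heq : ∀ p, 1 ≤ p → p < d → nthCost v B1 p = nthCost v B2 p) : lexLe v B1 B2 := by
  rcases eq_or_lt_of_le hd with h1 | h1
  · exact Or.inr ⟨0, by rw [nthCost_zero, nthCost_zero, h1]; exact hlt, by omega⟩
  · refine Or.inr ⟨d, hlt, fun p hp => ?_⟩
    rcases Nat.eq_zero_or_pos p with h0 | h0
    · subst h0
      rw [nthCost_zero, nthCost_zero]
      exact heq 1 le_rfl h1
    · exact heq p h0 hp

lemma lexEq_of_map_val {v : C → ℝ} {S B1 B2 : Finset C}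
    (hmono : ∀ c ∈ S, ∀ c' ∈ S, c ≤ c' → v c' ≤ v c)
    (hs1 : B1 ⊆ S) (hs2 : B2 ⊆ S)
    (hm : B1.val.map v = B2.val.map v) : lexEq v B1 B2 := by
  haveI : IsAntisymm ℝ (· ≥ ·) := ⟨fun a b h1 h2 => le_antisymm h2 h1⟩
  have key : ∀ B : Finset C, B ⊆ S → List.Pairwise (· ≥ ·) ((B.sort (· ≤ ·)).map v) := by
    intro B hBS
    apply List.Pairwise.map
    · exact fun a b h => h
    · apply List.Pairwise.imp_of_mem (l := B.sort (· ≤ ·))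
        (R := (· ≤ ·)) ?_ (Finset.pairwise_sort _ _)
      intro a b ha hb hab
      exact hmono a (hBS ((Finset.mem_sort _).1 ha)) b (hBS ((Finset.mem_sort _).1 hb)) hab
  have hperm : ((B1.sort (· ≤ ·)).map v).Perm ((B2.sort (· ≤ ·)).map v) := by
    rw [← Multiset.coe_eq_coe]
    simp only [← Multiset.map_coe, Finset.sort_eq, hm]
  have := List.Perm.eq_of_pairwise' (key B1 hs1) (key B2 hs2) hperm
  intro p
  unfold nthCost
  rw [this]

lemma hffdFill_subset {n : ℕ} (v : Fin n → C → ℝ) (h : Fin n → ℝ) (T : Finset (Fin n)) :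
    ∀ (L : List C) (B0 : Finset C),
      B0 ⊆ hffdFill v h T L B0 ∧ hffdFill v h T L B0 ⊆ B0 ∪ L.toFinset := by
  intro L
  induction L with
  | nil => intro B0; simp [hffdFill]
  | cons c rest ih =>
    intro B0
    rw [hffdFill]
    split
    · refine ⟨(Finset.subset_insert c B0).trans (ih (insert c B0)).1, ?_⟩
      refine (ih (insert c B0)).2.trans ?_
      intro x hx
      simp only [Finset.mem_union, Finset.mem_insert, List.toFinset_cons,
        List.mem_toFinset] at hx ⊢
      tauto
    · refine ⟨(ih B0).1, (ih B0).2.trans ?_⟩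
      intro x hx
      simp only [Finset.mem_union, List.toFinset_cons, List.mem_toFinset,
        Finset.mem_insert] at hx ⊢
      tauto

omit [LinearOrder C] in
lemma bundleCost_eq_sum_map (v : C → ℝ) (B : Finset C) :
    bundleCost v B = (B.val.map v).sum := rfl

lemma hffd_lex_max {n : ℕ} (v : Fin n → C → ℝ) (h : Fin n → ℝ) (T : Finset (Fin n))
    (ℓ : Fin n) (hT : ℓ ∈ T) (S : Finset C)
    (hpos : ∀ c ∈ S, 0 ≤ v ℓ c)
    (hmono : ∀ c ∈ S, ∀ c' ∈ S, c ≤ c' → v ℓ c' ≤ v ℓ c) :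
    ∀ (L : List C), L.Pairwise (· < ·) → (∀ x ∈ L, x ∈ S) →
    ∀ (B0 : Finset C), (∀ x ∈ B0, x ∈ S) → (∀ x ∈ B0, ∀ y ∈ L, x < y) →
    ∀ B : Finset C, (∀ x ∈ B, x ∈ L) → bundleCost (v ℓ) (B0 ∪ B) ≤ h ℓ →
    lexLe (v ℓ) (B0 ∪ B) (hffdFill v h T L B0) := by
  intro L
  induction L with
  | nil =>
    intro _ _ B0 _ _ B hBL _
    have hB : B = ∅ := Finset.eq_empty_of_forall_notMem fun x hx => by simpa using hBL x hx
    rw [hB, Finset.union_empty, hffdFill]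
    exact lexLe_refl _ _
  | cons c rest ih =>
    intro hsort hLS B0 hB0S hB0L B hBL hcost
    have hsrest : rest.Pairwise (· < ·) := (List.pairwise_cons.1 hsort).2
    have hcrest : ∀ y ∈ rest, c < y := (List.pairwise_cons.1 hsort).1
    have hcS : c ∈ S := hLS c List.mem_cons_self
    have hrestS : ∀ x ∈ rest, x ∈ S := fun x hx => hLS x (List.mem_cons_of_mem _ hx)
    have hB0c : ∀ x ∈ B0, x < c := fun x hx => hB0L x hx c List.mem_cons_self
    have hcB0 : c ∉ B0 := fun hc => lt_irrefl c (hB0c c hc)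
    have hB0rest : ∀ x ∈ B0, ∀ y ∈ rest, x < y :=
      fun x hx y hy => (hB0c x hx).trans (hcrest y hy)
    rw [hffdFill]
    split
    next hacc =>
      by_cases hcB : c ∈ B
      · have hrw : B0 ∪ B = insert c B0 ∪ B.erase c := by
          ext x
          simp only [Finset.mem_union, Finset.mem_insert, Finset.mem_erase]
          constructor
          · rintro (hx | hx)
            · exact Or.inl (Or.inr hx)
            · by_cases hxc : x = c
              · exact Or.inl (Or.inl hxc)
              · exact Or.inr ⟨hxc, hx⟩
          · rintro ((hx | hx) | ⟨hne, hx⟩)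
            · exact Or.inr (hx ▸ hcB)
            · exact Or.inl hx
            · exact Or.inr hx
        rw [hrw]
        apply ih hsrest hrestS (insert c B0)
          (fun x hx => by rcases Finset.mem_insert.1 hx with hx | hx
                          · exact hx ▸ hcS
                          · exact hB0S x hx)
          (fun x hx y hy => by rcases Finset.mem_insert.1 hx with hx | hx
                               · exact hx ▸ hcrest y hy
                               · exact hB0rest x hx y hy)
          (B.erase c)
          (fun x hx => by
            rcases Finset.mem_erase.1 hx with ⟨hne, hmem⟩
            rcases List.mem_cons.1 (hBL x hmem) with hx' | hx'
            · exact absurd hx' hne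
            · exact hx')
          (by rw [← hrw]; exact hcost)
      · -- c ∉ B
        have hBrest : ∀ x ∈ B, x ∈ rest := fun x hx => by
          rcases List.mem_cons.1 (hBL x hx) with hx' | hx'
          · exact absurd (hx' ▸ hx) hcB
          · exact hx'
        have hB0B : ∀ x ∈ B0, ∀ y ∈ B, x < y :=
          fun x hx y hy => hB0rest x hx y (hBrest y hy)
        set G := hffdFill v h T rest (insert c B0) with hG
        obtain ⟨hsubG, hGsub⟩ := hffdFill_subset v h T rest (insert c B0)
        rw [← hG] at hsubG hGsub
        have hB0G : B0 ⊆ G := (Finset.subset_insert c B0).trans hsubG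
        set G1 := G \ B0 with hG1def
        have hGdec : G = B0 ∪ G1 := by
          rw [hG1def, Finset.union_sdiff_of_subset hB0G]
        have hcG1 : c ∈ G1 :=
          Finset.mem_sdiff.2 ⟨hsubG (Finset.mem_insert_self c B0), hcB0⟩
        have hG1mem : ∀ y ∈ G1, y = c ∨ y ∈ rest := by
          intro y hy
          rcases Finset.mem_sdiff.1 hy with ⟨hyG, hyB0⟩
          have := hGsub hyG
          simp only [Finset.mem_union, Finset.mem_insert, List.mem_toFinset] at this
          tauto
        have hG1ge : ∀ y ∈ G1, c ≤ y := by
          intro y hy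
          rcases hG1mem y hy with h' | h'
          · exact h' ▸ le_rfl
          · exact (hcrest y h').le
        have hB0G1 : ∀ x ∈ B0, ∀ y ∈ G1, x < y :=
          fun x hx y hy => lt_of_lt_of_le (hB0c x hx) (hG1ge y hy)
        have hG1S : ∀ y ∈ G1, y ∈ S := by
          intro y hy
          rcases hG1mem y hy with h' | h'
          · exact h' ▸ hcS
          · exact hrestS y h'
        have hright_lo : ∀ p, p - 1 < B0.card → nthCost (v ℓ) G p = nthCost (v ℓ) B0 p := by
          intro p hp
          rw [hGdec]
          exact nthCost_union_left _ hB0G1 hp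
        have hG1min : G1.min' ⟨c, hcG1⟩ = c :=
          le_antisymm (Finset.min'_le _ c hcG1) (Finset.le_min' _ _ _ hG1ge)
        have hright_hi : nthCost (v ℓ) G (B0.card + 1) = v ℓ c := by
          rw [hGdec, nthCost_union_right _ hB0G1 (by omega)]
          rw [Nat.add_sub_cancel_left, nthCost_min' _ ⟨c, hcG1⟩, hG1min]
        have hleft_lo : ∀ p, p - 1 < B0.card →
            nthCost (v ℓ) (B0 ∪ B) p = nthCost (v ℓ) B0 p :=
          fun p hp => nthCost_union_left _ hB0B hp
        rcases B.eq_empty_or_nonempty with hBe | hBne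
        · rw [hBe, Finset.union_empty]
          rcases lt_or_ge 0 (v ℓ c) with hvc | hvc
          · apply lexLe_of_witness (d := B0.card + 1) (by omega)
            · rw [hright_hi, nthCost_eq_zero_of_card _ (by omega : B0.card ≤ (B0.card + 1) - 1)]
              exact hvc
            · intro p hp1 hpd
              rw [hright_lo p (by omega)]
          · have hvc0 : v ℓ c = 0 := le_antisymm hvc (hpos c hcS)
            left
            intro p
            rcases lt_or_ge (p - 1) B0.card with hp | hp
            · rw [hright_lo p hp]
            · rw [nthCost_eq_zero_of_card _ hp, hGdec, nthCost_union_right _ hB0G1 hp,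
                nthCost_eq_zero_of_vals]
              intro x hx
              have h1 := hmono c hcS x (hG1S x hx) (hG1ge x hx)
              have h2 := hpos x (hG1S x hx)
              linarith
        · set b1 := B.min' hBne with hb1def
          have hb1B : b1 ∈ B := B.min'_mem hBne
          have hb1rest : b1 ∈ rest := hBrest b1 hb1B
          have hcb1 : c < b1 := hcrest b1 hb1rest
          have hvb1 : v ℓ b1 ≤ v ℓ c := hmono c hcS b1 (hrestS b1 hb1rest) hcb1.le
          have hleft_hi : nthCost (v ℓ) (B0 ∪ B) (B0.card + 1) = v ℓ b1 := by
            rw [nthCost_union_right _ hB0B (by omega), Nat.add_sub_cancel_left,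
              nthCost_min' _ hBne]
          rcases eq_or_lt_of_le hvb1 with heq | hlt
          · -- exchange b1 for c, same value
            have hdisj1 : Disjoint B0 B := by
              rw [Finset.disjoint_left]
              exact fun a ha ha' => lt_irrefl a (hB0B a ha a ha')
            have hdisj2 : Disjoint (insert c B0) (B.erase b1) := by
              rw [Finset.disjoint_left]
              intro a ha ha'
              have haB : a ∈ B := Finset.mem_of_mem_erase ha'
              rcases Finset.mem_insert.1 ha with h' | h'
              · exact hcB (h' ▸ haB)
              · exact lt_irrefl a (hB0B a h' a haB)
            have hmul : (B0 ∪ B).val.map (v ℓ) =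
                ((insert c B0 ∪ B.erase b1)).val.map (v ℓ) := by
              rw [aux_union_val hdisj1, aux_union_val hdisj2,
                Finset.insert_val_of_notMem hcB0, Finset.erase_val]
              have hb1v : B.val = b1 ::ₘ B.val.erase b1 := (Multiset.cons_erase hb1B).symm
              rw [hb1v, Multiset.add_cons, Multiset.cons_add]
              simp only [Multiset.map_cons, heq]
              rw [Multiset.map_add, Multiset.map_add, Multiset.erase_cons_head]
            have hcost' : bundleCost (v ℓ) (insert c B0 ∪ B.erase b1) ≤ h ℓ := by
              rw [bundleCost_eq_sum_map, ← hmul, ← bundleCost_eq_sum_map]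
              exact hcost
            have hIH := ih hsrest hrestS (insert c B0)
              (fun x hx => by rcases Finset.mem_insert.1 hx with hx | hx
                              · exact hx ▸ hcS
                              · exact hB0S x hx)
              (fun x hx y hy => by rcases Finset.mem_insert.1 hx with hx | hx
                                   · exact hx ▸ hcrest y hy
                                   · exact hB0rest x hx y hy)
              (B.erase b1)
              (fun x hx => hBrest x (Finset.mem_of_mem_erase hx))
              hcost'
            refine lexLe_trans (Or.inl ?_) hIH
            apply lexEq_of_map_val hmono ?_ ?_ hmul
            · exact Finset.union_subset (fun x hx => hB0S x hx)
                (fun x hx => hrestS x (hBrest x hx))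
            · refine Finset.union_subset ?_
                (fun x hx => hrestS x (hBrest x (Finset.mem_of_mem_erase hx)))
              intro x hx
              rcases Finset.mem_insert.1 hx with hx | hx
              · exact hx ▸ hcS
              · exact hB0S x hx
          · apply lexLe_of_witness (d := B0.card + 1) (by omega)
            · rw [hleft_hi, hright_hi]
              exact hlt
            · intro p hp1 hpd
              rw [hleft_lo p (by omega), hright_lo p (by omega)]
    next hrej =>
      have hℓrej : ¬ bundleCost (v ℓ) (insert c B0) ≤ h ℓ := fun hc => hrej ⟨ℓ, hT, hc⟩
      have hcB : c ∉ B := by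
        intro hcB
        apply hℓrej
        refine le_trans (Finset.sum_le_sum_of_subset_of_nonneg ?_ ?_) hcost
        · intro x hx
          rcases Finset.mem_insert.1 hx with h' | h'
          · exact Finset.mem_union_right _ (h' ▸ hcB)
          · exact Finset.mem_union_left _ h'
        · intro x hx _
          rcases Finset.mem_union.1 hx with h' | h'
          · exact hpos x (hB0S x h')
          · exact hpos x (hLS x (hBL x h'))
      exact ih hsrest hrestS B0 hB0S hB0rest B
        (fun x hx => by
          rcases List.mem_cons.1 (hBL x hx) with h' | h'
          · exact absurd (h' ▸ hx) hcB
          · exact h')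
        hcost


/-- any bundle collection produced by a successful run of HFFD, viewed with the
cost function and threshold of the last agent, is First Fit Valid (provided the last agent's
threshold is at least her MMS). -/
theorem hffd_run_first_fit_valid {n : ℕ} (hn : 1 ≤ n)
    (M : Finset C) (v : Fin n → C → ℝ) (h : Fin n → ℝ)
    (hIDO : ∀ i, ChoreOrdered M (v i))
    (A : Fin n → Finset C) (assign : Fin n → Fin n)
    (hrun : IsHFFDRun M v h A assign)
    (ℓ : Fin n) (hℓ : ℓ = assign ⟨n - 1, by omega⟩)
    (hmms : MMS M (v ℓ) n ≤ h ℓ) :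
    FirstFitValid M A (v ℓ) (h ℓ) := by
  obtain ⟨hinj, hrun'⟩ := hrun
  have hTk : ∀ k : Fin n,
      ℓ ∈ Finset.univ \ (Finset.univ.filter fun j : Fin n => j < k).image assign := by
    intro k
    rw [Finset.mem_sdiff]
    refine ⟨Finset.mem_univ _, fun hmem => ?_⟩
    rcases Finset.mem_image.1 hmem with ⟨j, hj, hje⟩
    have hjk : j < k := (Finset.mem_filter.1 hj).2
    have hjl : j = ⟨n - 1, by omega⟩ := hinj (by rw [hje, ← hℓ])
    have hk := k.isLt
    rw [Fin.lt_def] at hjk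
    rw [Fin.ext_iff] at hjl
    simp only at hjl
    omega
  have hAeq : ∀ k : Fin n, A k = hffdFill v h
      (Finset.univ \ (Finset.univ.filter fun j : Fin n => j < k).image assign)
      ((M \ priorUnion A k).sort (· ≤ ·)) ∅ := fun k => (hrun' k).1
  have hAsubR : ∀ k, A k ⊆ M \ priorUnion A k := by
    intro k
    rw [hAeq k]
    refine (hffdFill_subset v h _ _ ∅).2.trans ?_
    intro x hx
    rw [Finset.empty_union, List.mem_toFinset, Finset.mem_sort] at hx
    exact hx
  have hAsub : ∀ k, A k ⊆ M := fun k =>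
    (hAsubR k).trans (Finset.sdiff_subset)
  have hdisj : ∀ i j : Fin n, i ≠ j → Disjoint (A i) (A j) := by
    have key : ∀ i j : Fin n, i < j → Disjoint (A i) (A j) := by
      intro i j hij
      rw [Finset.disjoint_left]
      intro a hai haj
      have h1 : a ∈ priorUnion A j := by
        rw [priorUnion, Finset.mem_biUnion]
        exact ⟨i, Finset.mem_filter.2 ⟨Finset.mem_univ _, hij⟩, hai⟩
      have h2 := hAsubR j haj
      rw [Finset.mem_sdiff] at h2
      exact h2.2 h1
    intro i j hij
    rcases lt_or_gt_of_ne hij with h' | h'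
    · exact key i j h'
    · exact (key j i h').symm
  refine ⟨hAsub, hdisj, hmms, ?_⟩
  intro k B hB
  obtain ⟨hBsub, hBcost, _⟩ := hB
  have hmain := hffd_lex_max v h
    (Finset.univ \ (Finset.univ.filter fun j : Fin n => j < k).image assign) ℓ (hTk k) M
    (hIDO ℓ).1 (hIDO ℓ).2
    ((M \ priorUnion A k).sort (· ≤ ·))
    (Finset.sortedLT_sort _).pairwise
    (fun x hx => Finset.sdiff_subset ((Finset.mem_sort _).1 hx))
    ∅ (by simp) (by simp)
    B
    (fun x hx => (Finset.mem_sort _).2 (hBsub hx))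
    (by rw [Finset.empty_union]; exact hBcost)
  rw [Finset.empty_union, ← hAeq k] at hmain
  exact hmain

end
end

section
/- Let (M, A, v, τ) be a First Fit Valid tuple with n bundles and let c* ∈ M \ (A_1 ∪ ... ∪ A_n) be an unallocated chore. Let M' = {c ∈ M : v(c) ≥ v(c*)} and A'_k = A_k ∩ M' for each k (i.e., remove all chores of cost smaller than v(c*)). Then (M', (A'_1, ..., A'_n), v, τ) is First Fit Valid. -/
open scoped Classical

noncomputable section

variable {C : Type*} [LinearOrder C]

-- auxiliary 0-indexed cost sequence
def gcost (v : C → ℝ) (B : Finset C) (i : ℕ) : ℝ :=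
  ((B.sort (· ≤ ·)).map v).getD i 0

lemma gcost_length (v : C → ℝ) (B : Finset C) :
    ((B.sort (· ≤ ·)).map v).length = B.card := by
  simp [Finset.length_sort]

lemma gcost_eq_zero (v : C → ℝ) {B : Finset C} {i : ℕ} (h : B.card ≤ i) :
    gcost v B i = 0 :=
  List.getD_eq_default _ _ (by rw [gcost_length]; exact h)

lemma gcost_mem (v : C → ℝ) {B : Finset C} {i : ℕ} (h : i < B.card) :
    ∃ c ∈ B, gcost v B i = v c := by
  have hl : i < ((B.sort (· ≤ ·)).map v).length := by rw [gcost_length]; exact h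
  have hl' : i < (B.sort (· ≤ ·)).length := by simpa using hl
  refine ⟨(B.sort (· ≤ ·))[i], ?_, ?_⟩
  · exact (Finset.mem_sort _).1 (List.getElem_mem hl')
  · rw [gcost, List.getD_eq_getElem _ _ hl, List.getElem_map]

lemma gcost_nonneg {M : Finset C} {v : C → ℝ} (hv : ChoreOrdered M v)
    {B : Finset C} (hBM : B ⊆ M) (i : ℕ) : 0 ≤ gcost v B i := by
  rcases lt_or_ge i B.card with h | h
  · obtain ⟨c, hc, he⟩ := gcost_mem v h
    rw [he]; exact hv.1 c (hBM hc)
  · rw [gcost_eq_zero v h]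

lemma gcost_antitone {M : Finset C} {v : C → ℝ} (hv : ChoreOrdered M v)
    {B : Finset C} (hBM : B ⊆ M) {i j : ℕ} (hij : i ≤ j) :
    gcost v B j ≤ gcost v B i := by
  rcases lt_or_ge j B.card with h | h
  · have hi : i < B.card := lt_of_le_of_lt hij h
    have hlj : j < (B.sort (· ≤ ·)).length := by rw [Finset.length_sort]; exact h
    have hli : i < (B.sort (· ≤ ·)).length := by rw [Finset.length_sort]; exact hi
    have hljm : j < ((B.sort (· ≤ ·)).map v).length := by rw [gcost_length]; exact h
    have hlim : i < ((B.sort (· ≤ ·)).map v).length := by rw [gcost_length]; exact hi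
    rw [gcost, gcost, List.getD_eq_getElem _ _ hljm, List.getD_eq_getElem _ _ hlim,
      List.getElem_map, List.getElem_map]
    have hmemi : (B.sort (· ≤ ·))[i] ∈ M := hBM ((Finset.mem_sort _).1 (List.getElem_mem hli))
    have hmemj : (B.sort (· ≤ ·))[j] ∈ M := hBM ((Finset.mem_sort _).1 (List.getElem_mem hlj))
    have hsorted := Finset.pairwise_sort B (· ≤ ·)
    have hle : (B.sort (· ≤ ·))[i] ≤ (B.sort (· ≤ ·))[j] := by
      have := hsorted.rel_get_of_le (a := ⟨i, hli⟩) (b := ⟨j, hlj⟩) (by exact hij)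
      simpa using this
    exact hv.2 _ hmemi _ hmemj hle
  · rw [gcost_eq_zero v h]
    exact gcost_nonneg hv hBM i

lemma nthCost_eq_gcost (v : C → ℝ) (B : Finset C) (p : ℕ) :
    nthCost v B p = gcost v B (p - 1) := rfl

lemma lexLe_iff (v : C → ℝ) (B1 B2 : Finset C) :
    lexLe v B1 B2 ↔ toLex (gcost v B1) ≤ toLex (gcost v B2) := by
  have hlt : toLex (gcost v B1) < toLex (gcost v B2) ↔
      Pi.Lex (· < ·) (· < ·) (gcost v B1) (gcost v B2) := Iff.rfl
  rw [le_iff_lt_or_eq, toLex_inj]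
  refine Iff.trans ?_ (or_congr_left hlt).symm
  constructor
  · rintro (heq | ⟨q, hq, hpre⟩)
    · right; funext i
      have := heq (i + 1)
      simpa [nthCost_eq_gcost] using this
    · left
      rcases Nat.eq_zero_or_pos q with hq0 | hq1
      · subst hq0
        exact ⟨0, fun j hj => absurd hj (Nat.not_lt_zero j), hq⟩
      · refine ⟨q - 1, fun j hj => ?_, hq⟩
        have := hpre (j + 1) (by omega)
        simpa [nthCost_eq_gcost] using this
  · rintro (⟨i, hpre, hi⟩ | heq)
    · right
      rcases Nat.eq_zero_or_pos i with hi0 | hi1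
      · subst hi0
        exact ⟨0, hi, fun p hp => absurd hp (Nat.not_lt_zero p)⟩
      · refine ⟨i + 1, by simpa [nthCost_eq_gcost] using hi, fun p hp => ?_⟩
        rw [nthCost_eq_gcost, nthCost_eq_gcost]
        exact hpre (p - 1) (by omega)
    · left; intro p
      rw [nthCost_eq_gcost, nthCost_eq_gcost, heq]

-- splitting a bundle along a down-closed predicate
lemma sort_split {M : Finset C} {v : C → ℝ} (hv : ChoreOrdered M v)
    {X : Finset C} (hXM : X ⊆ M) (p : C → Prop)
    (hdc : ∀ c ∈ X, ∀ c' ∈ X, p c' → c ≤ c' → p c) :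
    X.sort (· ≤ ·) = (X.filter p).sort (· ≤ ·) ++ (X.filter (fun c => ¬ p c)).sort (· ≤ ·) := by
  symm
  refine (fun hp h1 h2 => List.Perm.eq_of_pairwise' (r := (· ≤ ·)) h1 h2 hp) ?_ ?_ ?_
  · rw [← Multiset.coe_eq_coe]
    rw [show ((((X.filter p).sort (· ≤ ·)) ++ ((X.filter (fun c => ¬ p c)).sort (· ≤ ·)) : List C) : Multiset C) = (((X.filter p).sort (· ≤ ·) : List C) : Multiset C) + (((X.filter (fun c => ¬ p c)).sort (· ≤ ·) : List C) : Multiset C) from rfl]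
    rw [Finset.sort_eq, Finset.sort_eq, Finset.sort_eq, Finset.filter_val, Finset.filter_val]
    exact Multiset.filter_add_not p X.val
  · rw [List.pairwise_append]
    refine ⟨Finset.pairwise_sort _ _, Finset.pairwise_sort _ _, fun a ha b hb => ?_⟩
    have haX := (Finset.mem_sort _).1 ha
    have hbX := (Finset.mem_sort _).1 hb
    rw [Finset.mem_filter] at haX hbX
    by_contra hab
    push_neg at hab
    exact hbX.2 (hdc b (hbX.1) a (haX.1) haX.2 (le_of_lt hab))
  · exact Finset.pairwise_sort _ _

lemma gcost_split_lt {M : Finset C} {v : C → ℝ} (hv : ChoreOrdered M v)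
    {X : Finset C} (hXM : X ⊆ M) (p : C → Prop)
    (hdc : ∀ c ∈ X, ∀ c' ∈ X, p c' → c ≤ c' → p c)
    {i : ℕ} (hi : i < (X.filter p).card) :
    gcost v X i = gcost v (X.filter p) i := by
  rw [gcost, gcost, sort_split hv hXM p hdc, List.map_append,
    List.getD_append _ _ _ _ (by rw [gcost_length]; exact hi)]

lemma gcost_split_ge {M : Finset C} {v : C → ℝ} (hv : ChoreOrdered M v)
    {X : Finset C} (hXM : X ⊆ M) (p : C → Prop)
    (hdc : ∀ c ∈ X, ∀ c' ∈ X, p c' → c ≤ c' → p c)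
    {i : ℕ} (hi : (X.filter p).card ≤ i) (hi2 : i < X.card) :
    ∃ c ∈ X.filter (fun c => ¬ p c), gcost v X i = v c := by
  have hsplit := sort_split hv hXM p hdc
  have hcard : X.card = (X.filter p).card + (X.filter (fun c => ¬ p c)).card := by
    rw [← Finset.card_filter_add_card_filter_not (p := p)]
  have h2 : i - (X.filter p).card < (X.filter (fun c => ¬ p c)).card := by omega
  obtain ⟨c, hc, he⟩ := gcost_mem v h2
  refine ⟨c, hc, ?_⟩
  rw [gcost, hsplit, List.map_append,
    List.getD_append_right _ _ _ _ (by rw [gcost_length]; exact hi)]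
  rw [gcost_length]
  exact he

/-- removing all chores of cost smaller than that of an unallocated chore from
a First Fit Valid tuple keeps it First Fit Valid. -/
theorem remove_small_chores_first_fit_valid {n : ℕ}
    (M : Finset C) (A : Fin n → Finset C) (v : C → ℝ) (τ : ℝ)
    (hv : ChoreOrdered M v) (hFFV : FirstFitValid M A v τ)
    (cstar : C) (hc1 : cstar ∈ M) (hc2 : cstar ∉ Finset.univ.biUnion A) :
    FirstFitValid (M.filter fun c => v cstar ≤ v c)
      (fun k => (A k).filter fun c => v cstar ≤ v c) v τ := by

  classical
  obtain ⟨hA, hdisj, hmms, hbench⟩ := hFFV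
  have hcstar' : cstar ∈ M.filter (fun c => v cstar ≤ v c) :=
    Finset.mem_filter.2 ⟨hc1, le_refl _⟩
  refine ⟨?_, ?_, ?_, ?_⟩
  · intro k; exact Finset.filter_subset_filter _ (hA k)
  · intro i j hij; exact Finset.disjoint_filter_filter (hdisj i j hij)
  · -- MMS
    rcases Nat.eq_zero_or_pos n with hn | hn
    · subst hn
      have h1 : {x : ℝ | ∃ P : Fin 0 → Finset C,
          IsPartition (M.filter fun c => v cstar ≤ v c) P ∧ ∀ i, bundleCost v (P i) ≤ x} = ∅ := by
        ext x
        simp only [Set.mem_setOf_eq, Set.mem_empty_iff_false, iff_false, not_exists]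
        rintro P ⟨hP, -⟩
        obtain ⟨i, -⟩ := hP.2.2 cstar hcstar'
        exact i.elim0
      have h2 : {x : ℝ | ∃ P : Fin 0 → Finset C,
          IsPartition M P ∧ ∀ i, bundleCost v (P i) ≤ x} = ∅ := by
        ext x
        simp only [Set.mem_setOf_eq, Set.mem_empty_iff_false, iff_false, not_exists]
        rintro P ⟨hP, -⟩
        obtain ⟨i, -⟩ := hP.2.2 cstar hc1
        exact i.elim0
      unfold MMS at hmms ⊢
      rw [h1, Real.sInf_empty]
      rw [h2, Real.sInf_empty] at hmms
      exact hmms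
    · set i0 : Fin n := ⟨0, hn⟩ with hi0
      have hsub : {x : ℝ | ∃ P : Fin n → Finset C, IsPartition M P ∧ ∀ i, bundleCost v (P i) ≤ x}
          ⊆ {x : ℝ | ∃ P : Fin n → Finset C,
              IsPartition (M.filter fun c => v cstar ≤ v c) P ∧ ∀ i, bundleCost v (P i) ≤ x} := by
        rintro x ⟨P, ⟨hP1, hP2, hP3⟩, hPx⟩
        refine ⟨fun i => (P i).filter (fun c => v cstar ≤ v c), ⟨?_, ?_, ?_⟩, ?_⟩
        · intro i; exact Finset.filter_subset_filter _ (hP1 i)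
        · intro i j hij; exact Finset.disjoint_filter_filter (hP2 i j hij)
        · intro c hc
          rw [Finset.mem_filter] at hc
          obtain ⟨i, hi⟩ := hP3 c hc.1
          exact ⟨i, Finset.mem_filter.2 ⟨hi, hc.2⟩⟩
        · intro i
          refine le_trans ?_ (hPx i)
          exact Finset.sum_le_sum_of_subset_of_nonneg (Finset.filter_subset _ _)
            (fun c hc _ => hv.1 c (hP1 i hc))
      have hne : Set.Nonempty {x : ℝ | ∃ P : Fin n → Finset C,
          IsPartition M P ∧ ∀ i, bundleCost v (P i) ≤ x} := by
        refine ⟨bundleCost v M, fun i => if i = i0 then M else ∅, ⟨?_, ?_, ?_⟩, ?_⟩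
        · intro i
          by_cases h1 : i = i0 <;> simp [h1]
        · intro i j hij
          have h : i ≠ i0 ∨ j ≠ i0 := by
            by_contra h; push_neg at h; exact hij (h.1.trans h.2.symm)
          rcases h with h | h
          · simp [if_neg h]
          · simp [if_neg h]
        · intro c hc; exact ⟨i0, by simp [hc]⟩
        · intro i
          by_cases h1 : i = i0
          · simp [h1]
          · simp only [if_neg h1, bundleCost, Finset.sum_empty]
            exact Finset.sum_nonneg (fun c hc => hv.1 c hc)
      have hbdd : BddBelow {x : ℝ | ∃ P : Fin n → Finset C,
          IsPartition (M.filter fun c => v cstar ≤ v c) P ∧ ∀ i, bundleCost v (P i) ≤ x} := by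
        refine ⟨0, fun x hx => ?_⟩
        obtain ⟨P, hP, hPx⟩ := hx
        refine le_trans ?_ (hPx i0)
        exact Finset.sum_nonneg fun c hc =>
          hv.1 c (Finset.mem_filter.1 (hP.1 i0 hc)).1
      exact le_trans (csInf_le_csInf hbdd hne hsub) hmms
  · -- benchmark condition
    intro k B hB
    obtain ⟨hBsub, hBcost, -⟩ := hB
    show lexLe v B ((A k).filter fun c => v cstar ≤ v c)
    have hprior : priorUnion (fun k => (A k).filter fun c => v cstar ≤ v c) k
        = (priorUnion A k).filter (fun c => v cstar ≤ v c) := by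
      rw [priorUnion, priorUnion, Finset.filter_biUnion]
    have hBsub' : B ⊆ M \ priorUnion A k := by
      intro c hc
      have h1 := hBsub hc
      rw [Finset.mem_sdiff, hprior] at h1
      obtain ⟨h1a, h1b⟩ := h1
      rw [Finset.mem_filter] at h1a
      exact Finset.mem_sdiff.2 ⟨h1a.1, fun hcpr => h1b (Finset.mem_filter.2 ⟨hcpr, h1a.2⟩)⟩
    have hBM' : B ⊆ M.filter (fun c => v cstar ≤ v c) := fun c hc =>
      (Finset.mem_sdiff.1 (hBsub hc)).1
    have hBM : B ⊆ M := fun c hc => (Finset.mem_sdiff.1 (hBsub' hc)).1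
    set S : Finset (Finset C) :=
      (M \ priorUnion A k).powerset.filter (fun B' => bundleCost v B' ≤ τ) with hS
    have hBS : B ∈ S := Finset.mem_filter.2 ⟨Finset.mem_powerset.2 hBsub', hBcost⟩
    obtain ⟨Bmax, hBmaxS, hmax⟩ :=
      S.exists_max_image (fun B' => toLex (gcost v B')) ⟨B, hBS⟩
    have hBmax' := Finset.mem_filter.1 hBmaxS
    have hbm : IsBenchmark M v τ A k Bmax :=
      ⟨Finset.mem_powerset.1 hBmax'.1, hBmax'.2,
        fun B' hB'sub hB'cost => (lexLe_iff v B' Bmax).2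
          (hmax B' (Finset.mem_filter.2 ⟨Finset.mem_powerset.2 hB'sub, hB'cost⟩))⟩
    have hBA : toLex (gcost v B) ≤ toLex (gcost v (A k)) :=
      le_trans (hmax B hBS) ((lexLe_iff v Bmax (A k)).1 (hbench k Bmax hbm))
    rw [lexLe_iff]
    by_contra hcon
    rw [not_le] at hcon
    have hcon' : Pi.Lex (· < ·) (· < ·)
        (gcost v ((A k).filter fun c => v cstar ≤ v c)) (gcost v B) := hcon
    obtain ⟨i, hpre, hlt⟩ := hcon'
    set D := (A k).filter (fun c => v cstar ≤ v c) with hD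
    have hdc : ∀ c ∈ A k, ∀ c' ∈ A k, v cstar ≤ v c' → c ≤ c' → v cstar ≤ v c :=
      fun c hc c' hc' h1 h2 => le_trans h1 (hv.2 c (hA k hc) c' (hA k hc') h2)
    have hfinal : Pi.Lex (· < ·) (· < ·) (gcost v (A k)) (gcost v B) := by
      rcases lt_or_ge i D.card with hi | hi
      · refine ⟨i, fun j hj => ?_, ?_⟩
        · rw [gcost_split_lt hv (hA k) _ hdc (lt_trans hj hi)]
          exact hpre j hj
        · rw [gcost_split_lt hv (hA k) _ hdc hi]
          exact hlt
      · have h0 : gcost v D i = 0 := gcost_eq_zero v hi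
        have hBi : 0 < gcost v B i := by rw [h0] at hlt; exact hlt
        have hiB : i < B.card := by
          by_contra h
          push_neg at h
          rw [gcost_eq_zero v h] at hBi
          exact lt_irrefl 0 hBi
        have hBs : gcost v B i ≤ gcost v B D.card := gcost_antitone hv hBM hi
        have hBsc : v cstar ≤ gcost v B D.card := by
          obtain ⟨c, hc, he⟩ := gcost_mem v (lt_of_le_of_lt hi hiB)
          rw [he]
          exact (Finset.mem_filter.1 (hBM' hc)).2
        refine ⟨D.card, fun j hj => ?_, ?_⟩
        · rw [gcost_split_lt hv (hA k) _ hdc hj]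
          exact hpre j (lt_of_lt_of_le hj hi)
        · rcases lt_or_ge D.card (A k).card with h2 | h2
          · obtain ⟨c, hc, he⟩ := gcost_split_ge hv (hA k) _ hdc (le_refl _) h2
            rw [he]
            have hnc := (Finset.mem_filter.1 hc).2
            exact lt_of_lt_of_le (not_le.1 hnc) hBsc
          · rw [gcost_eq_zero v h2]
            exact lt_of_lt_of_le hBi hBs
    have hfinal' : toLex (gcost v (A k)) < toLex (gcost v B) := hfinal
    exact absurd hBA (not_le.2 hfinal')


end
end

section
/- Let (M, A, v, τ) be a First Fit Valid tuple with n bundles, let γ ≥ 0, and let B_k denote the k-th benchmark bundle of A. Then for every k ∈ {1, ..., n}: (a) A_k[≥γ] ≥lex B_k[≥γ]; and (b) if A_k[≥γ] >lex B_k[≥γ], then v(A_k[≥γ]) > τ. -/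
open scoped Classical

noncomputable section

variable {C : Type*} [LinearOrder C]

lemma getD_mem_or (m : List ℝ) (i : ℕ) : m.getD i 0 = 0 ∨ m.getD i 0 ∈ m := by
  induction m generalizing i with
  | nil => simp
  | cons a t ih =>
    cases i with
    | zero => simp
    | succ i =>
      rcases ih i with h | h
      · exact Or.inl (by simpa using h)
      · exact Or.inr (by simp only [List.getD_cons_succ]; exact List.mem_cons_of_mem _ h)

lemma getD_nonneg' {m : List ℝ} (h : ∀ x ∈ m, 0 ≤ x) (i : ℕ) : 0 ≤ m.getD i 0 := by
  rcases getD_mem_or m i with h' | h'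
  · rw [h']
  · exact h _ h'

lemma getD_anti' {m : List ℝ} (h0 : ∀ x ∈ m, 0 ≤ x)
    (h : m.Pairwise (fun a b => b ≤ a)) {i j : ℕ} (hij : i ≤ j) :
    m.getD j 0 ≤ m.getD i 0 := by
  induction m generalizing i j with
  | nil => simp
  | cons a t ih =>
    have h0t : ∀ x ∈ t, 0 ≤ x := fun x hx => h0 x (List.mem_cons_of_mem _ hx)
    have hat : ∀ x ∈ t, x ≤ a := (List.pairwise_cons.mp h).1
    cases i with
    | zero =>
      cases j with
      | zero => exact le_refl _
      | succ j =>
        simp only [List.getD_cons_succ, List.getD_cons_zero]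
        rcases getD_mem_or t j with h' | h'
        · rw [h']; exact h0 a List.mem_cons_self
        · exact hat _ h'
    | succ i =>
      cases j with
      | zero => omega
      | succ j =>
        simp only [List.getD_cons_succ]
        exact ih h0t (List.pairwise_cons.mp h).2 (by omega)

lemma filter_getD (γ : ℝ) {m : List ℝ} (h0 : ∀ x ∈ m, 0 ≤ x)
    (h : m.Pairwise (fun a b => b ≤ a)) (i : ℕ) :
    (m.filter (fun x => decide (γ ≤ x))).getD i 0 =
      if γ ≤ m.getD i 0 then m.getD i 0 else 0 := by
  induction m generalizing i with
  | nil => simp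
  | cons a t ih =>
    have h0t : ∀ x ∈ t, 0 ≤ x := fun x hx => h0 x (List.mem_cons_of_mem _ hx)
    have hat : ∀ x ∈ t, x ≤ a := (List.pairwise_cons.mp h).1
    have ht : t.Pairwise (fun a b : ℝ => b ≤ a) := (List.pairwise_cons.mp h).2
    by_cases ha : γ ≤ a
    · rw [List.filter_cons_of_pos (by simpa using ha)]
      cases i with
      | zero => simp [ha]
      | succ i => simpa using ih h0t ht i
    · rw [List.filter_cons_of_neg (by simpa using ha)]
      push_neg at ha
      have htlt : ∀ j, t.getD j 0 < γ := by
        intro j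
        rcases getD_mem_or t j with h' | h'
        · rw [h']; exact lt_of_le_of_lt (h0 a List.mem_cons_self) ha
        · exact lt_of_le_of_lt (hat _ h') ha
      rw [ih h0t ht i, if_neg (not_le.mpr (htlt i))]
      cases i with
      | zero => rw [List.getD_cons_zero, if_neg (not_le.mpr ha)]
      | succ i => rw [List.getD_cons_succ, if_neg (not_le.mpr (htlt i))]

lemma sort_filter' (B : Finset C) (p : C → Prop) :
    (B.filter p).sort (· ≤ ·) = (B.sort (· ≤ ·)).filter (fun c => decide (p c)) := by
  refine List.Perm.eq_of_pairwise' (r := (· ≤ ·)) ?_ ?_ ?_; rotate_right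
  · rw [← Multiset.coe_eq_coe]
    rw [Finset.sort, Multiset.sort_eq, Finset.filter_val, ← Multiset.filter_coe (p := p),
      Finset.sort, Multiset.sort_eq]
  · exact Finset.pairwise_sort _ _
  · exact (Finset.pairwise_sort B _).filter _

section
variable {M : Finset C} {v : C → ℝ}

lemma costList_nonneg (hv : ChoreOrdered M v) {B : Finset C} (hB : B ⊆ M) :
    ∀ x ∈ (B.sort (· ≤ ·)).map v, 0 ≤ x := by
  intro x hx
  rcases List.mem_map.mp hx with ⟨c, hc, rfl⟩
  exact hv.1 c (hB ((Finset.mem_sort _).mp hc))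

lemma costList_pairwise (hv : ChoreOrdered M v) {B : Finset C} (hB : B ⊆ M) :
    ((B.sort (· ≤ ·)).map v).Pairwise (fun a b => b ≤ a) := by
  rw [List.pairwise_map]
  exact (Finset.pairwise_sort B (· ≤ ·)).imp_of_mem fun ha hb hab =>
    hv.2 _ (hB ((Finset.mem_sort _).mp ha)) _ (hB ((Finset.mem_sort _).mp hb)) hab

lemma nthCost_filter (hv : ChoreOrdered M v) {B : Finset C} (hB : B ⊆ M) (γ : ℝ) (p : ℕ) :
    nthCost v (B.filter fun c => γ ≤ v c) p =
      if γ ≤ nthCost v B p then nthCost v B p else 0 := by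
  unfold nthCost
  rw [sort_filter']
  have hmf : List.map v (List.filter (fun c => decide (γ ≤ v c)) (B.sort (· ≤ ·))) =
      List.filter (fun x => decide (γ ≤ x)) (List.map v (B.sort (· ≤ ·))) := by
    rw [List.filter_map]
    rfl
  rw [hmf]
  exact filter_getD γ (costList_nonneg hv hB) (costList_pairwise hv hB) (p - 1)

lemma nthCost_nonneg (hv : ChoreOrdered M v) {B : Finset C} (hB : B ⊆ M) (p : ℕ) :
    0 ≤ nthCost v B p :=
  getD_nonneg' (costList_nonneg hv hB) _

lemma nthCost_anti (hv : ChoreOrdered M v) {B : Finset C} (hB : B ⊆ M) {p q : ℕ}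
    (hpq : p ≤ q) : nthCost v B q ≤ nthCost v B p :=
  getD_anti' (costList_nonneg hv hB) (costList_pairwise hv hB) (Nat.sub_le_sub_right hpq 1)

lemma lexLe_filter (hv : ChoreOrdered M v) {γ : ℝ} (hγ : 0 ≤ γ) {X Y : Finset C}
    (hX : X ⊆ M) (hY : Y ⊆ M) (h : lexLe v X Y) :
    lexLe v (X.filter fun c => γ ≤ v c) (Y.filter fun c => γ ≤ v c) := by
  have fX := nthCost_filter hv hX γ
  have fY := nthCost_filter hv hY γ
  rcases h with h | ⟨q, hq, hpre⟩
  · exact Or.inl fun p => by rw [fX p, fY p, h p]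
  · by_cases hfq : γ ≤ nthCost v X q
    · refine Or.inr ⟨q, ?_, fun p hp => by rw [fX p, fY p, hpre p hp]⟩
      rw [fX q, fY q, if_pos hfq, if_pos (le_of_lt (lt_of_le_of_lt hfq hq))]
      exact hq
    · by_cases hgq : γ ≤ nthCost v Y q
      · refine Or.inr ⟨q, ?_, fun p hp => by rw [fX p, fY p, hpre p hp]⟩
        rw [fX q, fY q, if_neg hfq, if_pos hgq]
        have hγ0 : 0 < γ :=
          lt_of_le_of_ne hγ (fun h0 => hfq (h0 ▸ nthCost_nonneg hv hX q))
        exact lt_of_lt_of_le hγ0 hgq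
      · refine Or.inl fun p => ?_
        rw [fX p, fY p]
        rcases lt_or_ge p q with hp | hp
        · rw [hpre p hp]
        · rw [if_neg fun hc => hfq (le_trans hc (nthCost_anti hv hX hp)),
            if_neg fun hc => hgq (le_trans hc (nthCost_anti hv hY hp))]

lemma lexLt_asymm {X Y : Finset C} (h1 : lexLt v X Y) (h2 : lexLe v Y X) : False := by
  rcases h1 with ⟨h1, hne⟩
  rcases h1 with h1 | ⟨q, hq, hpre⟩
  · exact hne h1
  rcases h2 with h2 | ⟨q', hq', hpre'⟩
  · exact absurd (h2 q).symm (ne_of_lt hq)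
  rcases lt_trichotomy q q' with h | h | h
  · exact absurd (hpre' q h).symm (ne_of_lt hq)
  · subst h; exact absurd hq (not_lt_of_gt hq')
  · exact absurd (hpre q' h) (ne_of_gt hq')

end

/-- truncating bundles below a cost threshold `γ` preserves the benchmark
inequalities of a First Fit Valid tuple: (a) `A_k[≥γ] ≥lex B_k[≥γ]`, and (b) if the
inequality is strict then `v(A_k[≥γ]) > τ`. -/
theorem truncated_benchmark {n : ℕ}
    (M : Finset C) (A : Fin n → Finset C) (v : C → ℝ) (τ : ℝ)
    (hv : ChoreOrdered M v) (hFFV : FirstFitValid M A v τ)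
    (γ : ℝ) (hγ : 0 ≤ γ)
    (k : Fin n) (B : Finset C) (hB : IsBenchmark M v τ A k B) :
    lexLe v (B.filter fun c => γ ≤ v c) ((A k).filter fun c => γ ≤ v c) ∧
    (lexLt v (B.filter fun c => γ ≤ v c) ((A k).filter fun c => γ ≤ v c) →
      τ < bundleCost v ((A k).filter fun c => γ ≤ v c)) := by
  have hAM : A k ⊆ M := hFFV.1 k
  have hBM : B ⊆ M := fun c hc => (Finset.mem_sdiff.mp (hB.1 hc)).1
  have hle : lexLe v B (A k) := hFFV.2.2.2 k B hB
  have hmain : lexLe v (B.filter fun c => γ ≤ v c) ((A k).filter fun c => γ ≤ v c) :=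
    lexLe_filter hv hγ hBM hAM hle
  refine ⟨hmain, ?_⟩
  intro hlt
  by_contra hcost
  push_neg at hcost
  have hsub : ((A k).filter fun c => γ ≤ v c) ⊆ M \ priorUnion A k := by
    intro c hc
    have hcA : c ∈ A k := Finset.mem_of_mem_filter _ hc
    rw [Finset.mem_sdiff]
    refine ⟨hAM hcA, ?_⟩
    intro hcp
    rcases Finset.mem_biUnion.mp hcp with ⟨j, hj, hcj⟩
    have hjk : j ≠ k := ne_of_lt (Finset.mem_filter.mp hj).2
    exact Finset.disjoint_left.mp (hFFV.2.1 j k hjk) hcj hcA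
  have hbk : lexLe v ((A k).filter fun c => γ ≤ v c) B := hB.2.2 _ hsub hcost
  have h2 : lexLe v ((((A k).filter fun c => γ ≤ v c)).filter fun c => γ ≤ v c)
      (B.filter fun c => γ ≤ v c) :=
    lexLe_filter hv hγ (fun c hc => hAM (Finset.mem_of_mem_filter _ hc)) hBM hbk
  have hidem : ((((A k).filter fun c => γ ≤ v c)).filter fun c => γ ≤ v c)
      = ((A k).filter fun c => γ ≤ v c) := by
    ext c
    simp only [Finset.mem_filter]
    tauto
  rw [hidem] at h2
  exact lexLt_asymm hlt h2


end
end
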